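/- Let f be a complex-valued arithmetic function, and suppose there are constants α ∈ [0,1), θ ≥ 0 and K > 0 such that |f(n)| ≤ K·n^α·(log n)^θ for all n ≥ 2. Then there is a constant C > 0 (depending on f, α, θ) such that for all integers x ≥ 2, |Σ_{n ≤ x} f(⌊x/n⌋) − x·Σ_{n=1}^∞ f(n)/(n(n+1))| ≤ C·x^{(α+1)/2}·(log x)^θ. -/

import Mathlib

open Finset Real

namespace WuZhai


lemma mvt_rpow {a : ℝ} (p : ℝ) (ha : 1 ≤ a) :
    ∃ c, a < c ∧ c < a + 1 ∧ (a+1) ^ p - a ^ p = p * c ^ (p - 1) := by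
  have h01 : a < a + 1 := by linarith
  have hcont : ContinuousOn (fun t : ℝ => t ^ p) (Set.Icc a (a+1)) := by
    apply ContinuousOn.rpow_const continuousOn_id
    intro t ht
    rw [Set.mem_Icc] at ht
    exact Or.inl (by simp only [id]; nlinarith [ht.1])
  have hderiv : ∀ t ∈ Set.Ioo a (a+1), HasDerivAt (fun t : ℝ => t ^ p) (p * t ^ (p-1)) t := by
    intro t ht
    rw [Set.mem_Ioo] at ht
    exact Real.hasDerivAt_rpow_const (x := t) (p := p) (Or.inl (by nlinarith [ht.1]))
  obtain ⟨c, hc, hceq⟩ := exists_hasDerivAt_eq_slope (fun t : ℝ => t ^ p) _ h01 hcont hderiv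
  refine ⟨c, hc.1, hc.2, ?_⟩
  rw [hceq]; field_simp; ring

lemma rpow_anti {s t e : ℝ} (hs : 0 < s) (hst : s ≤ t) (he : e ≤ 0) : t ^ e ≤ s ^ e :=
  Real.rpow_le_rpow_of_nonpos hs hst he

lemma I1 {n : ℕ} (hn : 1 ≤ n) {α : ℝ} (hα0 : 0 ≤ α) (hα1 : α < 1) :
    (n : ℝ) ^ (-α) ≤ ((n:ℝ) ^ (1-α) - ((n:ℝ) - 1) ^ (1-α)) / (1 - α) := by
  have h1α : (0:ℝ) < 1 - α := by linarith
  rcases eq_or_lt_of_le hn with h | h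
  · have hone : (n:ℝ) = 1 := by exact_mod_cast h.symm
    rw [hone, le_div_iff₀ h1α]
    rw [Real.one_rpow, Real.one_rpow]
    have : (1:ℝ) - 1 = 0 := by ring
    rw [this, Real.zero_rpow (by linarith)]
    linarith
  · have hn2 : (2:ℝ) ≤ (n:ℝ) := by exact_mod_cast h
    have ha : (1:ℝ) ≤ (n:ℝ) - 1 := by linarith
    obtain ⟨c, hc1, hc2, heq⟩ := mvt_rpow (1-α) ha
    have hsub : (n:ℝ) - 1 + 1 = n := by ring
    rw [hsub] at heq hc2
    rw [heq, le_div_iff₀ h1α, mul_comm]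
    have hkey : (n:ℝ) ^ (-α) ≤ c ^ (1 - α - 1) := by
      have : (1:ℝ) - α - 1 = -α := by ring
      rw [this]
      exact rpow_anti (by linarith) (le_of_lt hc2) (by linarith)
    nlinarith [hkey]

lemma I2 {n : ℕ} (hn : 2 ≤ n) {q : ℝ} (hq : q < -1) :
    (n : ℝ) ^ q ≤ (((n:ℝ) - 1) ^ (q+1) - (n:ℝ) ^ (q+1)) / (-(q+1)) := by
  have hq1 : (0:ℝ) < -(q+1) := by linarith
  have hn2 : (2:ℝ) ≤ (n:ℝ) := by exact_mod_cast hn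
  have ha : (1:ℝ) ≤ (n:ℝ) - 1 := by linarith
  obtain ⟨c, hc1, hc2, heq⟩ := mvt_rpow (q+1) ha
  have hsub : (n:ℝ) - 1 + 1 = n := by ring
  rw [hsub] at heq hc2
  have heq' : ((n:ℝ) - 1) ^ (q+1) - (n:ℝ) ^ (q+1) = (-(q+1)) * c ^ (q + 1 - 1) := by
    rw [← neg_sub, heq]; ring
  rw [heq', le_div_iff₀ hq1, mul_comm]
  have hkey : (n:ℝ) ^ q ≤ c ^ (q + 1 - 1) := by
    have : q + 1 - 1 = q := by ring
    rw [this]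
    exact rpow_anti (by linarith) (le_of_lt hc2) (by linarith)
  nlinarith [hkey]
lemma S1 (N : ℕ) {α : ℝ} (hα0 : 0 ≤ α) (hα1 : α < 1) :
    ∑ n ∈ Icc 1 N, (n:ℝ) ^ (-α) ≤ (N:ℝ) ^ (1-α) / (1-α) := by
  have h1α : (0:ℝ) < 1 - α := by linarith
  have : Icc 1 N = Ico 1 (N+1) := by rw [Finset.Ico_add_one_right_eq_Icc]
  rw [this, Finset.sum_Ico_eq_sum_range]
  simp only [Nat.add_sub_cancel]
  calc ∑ k ∈ range N, ((1+k:ℕ):ℝ) ^ (-α)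
      ≤ ∑ k ∈ range N, ((((k+1:ℕ)):ℝ) ^ (1-α) - ((k:ℕ):ℝ) ^ (1-α)) / (1-α) := by
        apply Finset.sum_le_sum
        intro k _
        have hg : 1 + k = k + 1 := by omega
        rw [hg]
        have := I1 (n := k+1) (by omega) hα0 hα1
        have hc2 : ((k+1:ℕ):ℝ) - 1 = ((k:ℕ):ℝ) := by push_cast; ring
        rw [hc2] at this
        exact this
    _ = (∑ k ∈ range N, (((k+1:ℕ):ℝ) ^ (1-α) - ((k:ℕ):ℝ) ^ (1-α))) / (1-α) := by
        rw [Finset.sum_div]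
    _ ≤ (N:ℝ) ^ (1-α) / (1-α) := by
        rw [Finset.sum_range_sub (fun i => ((i:ℕ):ℝ) ^ (1-α))]
        simp [Real.zero_rpow (ne_of_gt h1α)]

lemma S2 {M : ℕ} (hM : 1 ≤ M) {q : ℝ} (hq : q < -1) (n : ℕ) :
    ∑ k ∈ range n, ((M+1+k:ℕ):ℝ) ^ q ≤ (M:ℝ) ^ (q+1) / (-(q+1)) := by
  have hq1 : (0:ℝ) < -(q+1) := by linarith
  calc ∑ k ∈ range n, ((M+1+k:ℕ):ℝ) ^ q
      ≤ ∑ k ∈ range n, (((M+k:ℕ):ℝ) ^ (q+1) - ((M+k+1:ℕ):ℝ) ^ (q+1)) / (-(q+1)) := by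
        apply Finset.sum_le_sum
        intro k _
        have hg : M + 1 + k = M + k + 1 := by omega
        rw [hg]
        have := I2 (n := M+k+1) (by omega) hq
        have hc : ((M+k+1:ℕ):ℝ) - 1 = ((M+k:ℕ):ℝ) := by push_cast; ring
        rw [hc] at this
        exact this
    _ = (∑ k ∈ range n, (((M+k:ℕ):ℝ) ^ (q+1) - ((M+k+1:ℕ):ℝ) ^ (q+1))) / (-(q+1)) := by
        rw [Finset.sum_div]
    _ = ((M:ℝ) ^ (q+1) - ((M+n:ℕ):ℝ) ^ (q+1)) / (-(q+1)) := by
        have : ∀ k ∈ range n, ((M+k:ℕ):ℝ) ^ (q+1) - ((M+k+1:ℕ):ℝ) ^ (q+1)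
            = (fun i => ((M+i:ℕ):ℝ) ^ (q+1)) k - (fun i => ((M+i:ℕ):ℝ) ^ (q+1)) (k+1) := by
          intro k _
          have h : M+k+1 = M+(k+1) := by omega
          rw [h]
        rw [Finset.sum_congr rfl this, Finset.sum_range_sub' (fun i => ((M+i:ℕ):ℝ) ^ (q+1))]
        simp
    _ ≤ (M:ℝ) ^ (q+1) / (-(q+1)) := by
        gcongr
        have := Real.rpow_nonneg (x := ((M+n:ℕ):ℝ)) (by positivity) (q+1)
        linarith

-- for n ∈ [1,x]: m ≤ x/n ↔ n ≤ x/m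
lemma div_ge_iff {x n m : ℕ} (hn : 1 ≤ n) (hm : 1 ≤ m) : m ≤ x / n ↔ n ≤ x / m := by
  rw [Nat.le_div_iff_mul_le hn, Nat.le_div_iff_mul_le hm, mul_comm]

lemma fiber_eq (x m : ℕ) (hm : 1 ≤ m) :
    (Icc 1 x).filter (fun n => x / n = m) = Ioc (x/(m+1)) (x/m) := by
  ext n
  simp only [mem_filter, mem_Icc, mem_Ioc]
  constructor
  · rintro ⟨⟨h1, h2⟩, h3⟩
    constructor
    · by_contra h
      push_neg at h
      have : m + 1 ≤ x / n := (div_ge_iff h1 (by omega)).mpr h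
      omega
    · exact (div_ge_iff h1 hm).mp (le_of_eq h3.symm)
  · rintro ⟨h1, h2⟩
    have hn1 : 1 ≤ n := Nat.lt_of_le_of_lt (Nat.zero_le _) h1
    have hnx : n ≤ x := le_trans h2 (Nat.div_le_self x m)
    have hge : m ≤ x / n := (div_ge_iff hn1 hm).mpr h2
    have hlt : ¬ (m + 1 ≤ x / n) := by
      intro h
      exact absurd ((div_ge_iff hn1 (by omega)).mp h) (by omega)
    exact ⟨⟨hn1, hnx⟩, by omega⟩

lemma fiber_card (x m : ℕ) (hm : 1 ≤ m) :
    ((Icc 1 x).filter (fun n => x / n = m)).card = x / m - x / (m+1) := by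
  rw [fiber_eq x m hm, Nat.card_Ioc]

-- regrouping of the small part
lemma regroup (f : ℕ → ℂ) (x y : ℕ) (hx : 1 ≤ x) :
    ∑ n ∈ (Icc 1 x).filter (fun n => x / n ≤ y), f (x / n)
      = ∑ m ∈ Icc 1 y, ((x / m - x / (m+1) : ℕ) : ℂ) * f m := by
  have hmaps : ∀ n ∈ (Icc 1 x).filter (fun n => x / n ≤ y), x / n ∈ Icc 1 y := by
    intro n hn
    simp only [mem_filter, mem_Icc] at hn ⊢
    exact ⟨(Nat.one_le_div_iff (by omega)).mpr hn.1.2, hn.2⟩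
  rw [← Finset.sum_fiberwise_of_maps_to hmaps (fun n => f (x / n))]
  apply Finset.sum_congr rfl
  intro m hm
  rw [mem_Icc] at hm
  have hfilter : ((Icc 1 x).filter (fun n => x / n ≤ y)).filter (fun n => x / n = m)
      = (Icc 1 x).filter (fun n => x / n = m) := by
    ext n
    simp only [mem_filter, mem_Icc]
    constructor
    · rintro ⟨⟨h1, _⟩, h2⟩; exact ⟨h1, h2⟩
    · rintro ⟨h1, h2⟩; exact ⟨⟨h1, h2 ▸ hm.2⟩, h2⟩
  rw [hfilter]
  have : ∀ n ∈ (Icc 1 x).filter (fun n => x / n = m), f (x / n) = f m := by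
    intro n hn
    rw [mem_filter] at hn
    rw [hn.2]
  rw [Finset.sum_congr rfl this, Finset.sum_const, fiber_card x m hm.1, nsmul_eq_mul]

lemma nat_div_sandwich (x m : ℕ) (hm : 1 ≤ m) :
    ((x / m : ℕ) : ℝ) ≤ (x:ℝ)/(m:ℝ) ∧ (x:ℝ)/(m:ℝ) < ((x / m : ℕ) : ℝ) + 1 := by
  have hm0 : (0:ℝ) < m := by exact_mod_cast hm
  constructor
  · exact Nat.cast_div_le
  · rw [div_lt_iff₀ hm0]
    have : x < (x / m + 1) * m := (Nat.div_lt_iff_lt_mul (by omega)).mp (Nat.lt_succ_self _)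
    calc (x:ℝ) < (((x/m + 1) * m : ℕ) : ℝ) := by exact_mod_cast this
      _ = (((x/m:ℕ):ℝ) + 1) * m := by push_cast; ring

lemma cdiff (x m : ℕ) (hm : 1 ≤ m) :
    ‖(((x/m - x/(m+1) : ℕ)) : ℂ) - (x:ℂ) / ((m:ℂ) * ((m:ℂ)+1))‖ ≤ 1 := by
  have hle : x/(m+1) ≤ x/m := Nat.div_le_div_left (by omega) (by omega)
  have hm0 : (0:ℝ) < m := by exact_mod_cast hm
  have hm1 : (0:ℝ) < (m:ℝ) + 1 := by linarith
  obtain ⟨hu1, hu2⟩ := nat_div_sandwich x m hm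
  obtain ⟨hv1, hv2⟩ := nat_div_sandwich x (m+1) (by omega)
  set r : ℝ := (((x/m : ℕ):ℝ) - ((x/(m+1) : ℕ):ℝ)) - (x:ℝ)/((m:ℝ) * ((m:ℝ)+1)) with hr
  have hcast : (((x/m - x/(m+1) : ℕ)) : ℂ) - (x:ℂ) / ((m:ℂ) * ((m:ℂ)+1)) = (r : ℂ) := by
    rw [hr]
    push_cast [hle]
    ring
  rw [hcast, Complex.norm_real, Real.norm_eq_abs]
  have hsplit : (x:ℝ)/((m:ℝ) * ((m:ℝ)+1)) = (x:ℝ)/(m:ℝ) - (x:ℝ)/((m:ℝ)+1) := by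
    field_simp
    ring
  rw [abs_le]
  constructor <;> (rw [hr, hsplit]; push_cast [hv2] at *; linarith)

lemma logpow {θ ε t : ℝ} (hθ : 0 ≤ θ) (hε : 0 < ε) (ht : 1 ≤ t) :
    (Real.log t) ^ θ ≤ ε^(-θ) * t^(ε*θ) := by
  have h0 : 0 ≤ Real.log t := Real.log_nonneg ht
  have h1 : Real.log t ≤ t ^ ε / ε := Real.log_le_rpow_div (by linarith) hε
  calc (Real.log t) ^ θ ≤ (t ^ ε / ε) ^ θ := Real.rpow_le_rpow h0 h1 hθ
    _ = (t ^ ε) ^ θ / ε ^ θ := Real.div_rpow (Real.rpow_nonneg (by linarith) _) (le_of_lt hε) _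
    _ = ε^(-θ) * t^(ε*θ) := by
        rw [← Real.rpow_mul (by linarith), Real.rpow_neg (le_of_lt hε)]
        ring

lemma tnorm (f : ℕ → ℂ) {m : ℕ} (hm : 1 ≤ m) :
    ‖f m / ((m:ℂ) * ((m:ℂ) + 1))‖ ≤ ‖f m‖ * (m:ℝ)^(-2:ℝ) := by
  have hm0 : (0:ℝ) < m := by exact_mod_cast hm
  have hden : ((m:ℂ) * ((m:ℂ) + 1)) = ((m*(m+1) : ℕ) : ℂ) := by push_cast; ring
  rw [norm_div, hden, Complex.norm_natCast]
  have h2 : ‖f m‖ * (m:ℝ)^(-2:ℝ) = ‖f m‖ / ((m:ℝ)*(m:ℝ)) := by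
    rw [Real.rpow_neg (le_of_lt hm0), Real.rpow_two, div_eq_mul_inv, sq]
  rw [h2]
  have hc : ((m*(m+1):ℕ):ℝ) = (m:ℝ)*((m:ℝ)+1) := by push_cast; ring
  rw [hc]
  apply div_le_div_of_nonneg_left (norm_nonneg _) (by positivity)
  nlinarith

end WuZhai

open WuZhai

set_option maxHeartbeats 2000000 in
theorem wu_zhai_lemma (f : ℕ → ℂ) (α θ K : ℝ)
    (hα0 : 0 ≤ α) (hα1 : α < 1) (hθ : 0 ≤ θ) (hK : 0 < K)
    (hf : ∀ n : ℕ, 2 ≤ n → ‖f n‖ ≤ K * (n : ℝ) ^ α * (Real.log n) ^ θ) :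
    ∃ C > (0:ℝ), ∀ x : ℕ, 2 ≤ x →
      ‖(∑ n ∈ Finset.Icc 1 x, f (x / n)) -
          (x : ℂ) * ∑' n : ℕ, f n / ((n : ℂ) * ((n : ℂ) + 1))‖
        ≤ C * (x : ℝ) ^ ((α + 1) / 2) * (Real.log x) ^ θ := by
  set t : ℕ → ℂ := fun n => f n / ((n:ℂ) * ((n:ℂ) + 1)) with ht
  -- constants
  set ε : ℝ := (1-α)/(2*(θ+1)) with hεdef
  have hε : 0 < ε := div_pos (by linarith) (by positivity)
  have hεθ : ε*θ ≤ (1-α)/2 := by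
    rw [hεdef, div_mul_eq_mul_div, div_le_div_iff₀ (by positivity) two_pos]
    nlinarith
  set q : ℝ := α - 2 + ε*θ with hqdef
  have hq : q < -1 := by rw [hqdef]; linarith
  have hq2 : q + 2 ≤ (α+1)/2 := by rw [hqdef]; linarith
  have hq1 : (1-α)/2 ≤ -(q+1) := by rw [hqdef]; linarith
  set C₂ : ℝ := K * ε^(-θ:ℝ) with hC₂def
  have hC₂ : 0 < C₂ := by
    rw [hC₂def]; exact mul_pos hK (Real.rpow_pos_of_pos hε _)
  set L2 : ℝ := (Real.log 2)^(θ:ℝ) with hL2def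
  have hL2 : 0 < L2 := Real.rpow_pos_of_pos (Real.log_pos one_lt_two) _
  -- term bounds
  have htb : ∀ m : ℕ, 2 ≤ m → ‖t m‖ ≤ C₂ * (m:ℝ)^q := by
    intro m hm
    have hm0 : (0:ℝ) < m := by exact_mod_cast (by omega : 0 < m)
    have hm1 : (1:ℝ) ≤ m := by exact_mod_cast (by omega : 1 ≤ m)
    have hrneg : (0:ℝ) ≤ (m:ℝ)^(-2:ℝ) := Real.rpow_nonneg (le_of_lt hm0) _
    calc ‖t m‖ ≤ ‖f m‖ * (m:ℝ)^(-2:ℝ) := WuZhai.tnorm f (by omega)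
      _ ≤ (K * (m:ℝ)^α * (Real.log m)^θ) * (m:ℝ)^(-2:ℝ) :=
          mul_le_mul_of_nonneg_right (hf m hm) hrneg
      _ ≤ (K * (m:ℝ)^α * (ε^(-θ:ℝ) * (m:ℝ)^(ε*θ))) * (m:ℝ)^(-2:ℝ) := by
          gcongr (K * (m:ℝ)^α * ?_) * (m:ℝ)^(-2:ℝ)
          exact WuZhai.logpow hθ hε hm1
      _ = C₂ * (m:ℝ)^q := by
          have hmq : (m:ℝ)^α * (m:ℝ)^(ε*θ) * (m:ℝ)^(-2:ℝ) = (m:ℝ)^q := by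
            rw [← Real.rpow_add hm0, ← Real.rpow_add hm0, hqdef]
            congr 1
            ring
          rw [hC₂def, ← hmq]
          ring
  have hsum_norm : Summable (fun n => ‖t n‖) := by
    apply Summable.of_norm_bounded_eventually (g := fun n : ℕ => C₂ * (n:ℝ)^q)
      ((Real.summable_nat_rpow.mpr hq).mul_left C₂)
    rw [Nat.cofinite_eq_atTop]
    filter_upwards [Filter.eventually_ge_atTop 2] with m hm
    rw [norm_norm]
    exact htb m hm
  have hsum : Summable t := hsum_norm.of_norm
  -- the constant
  have h1α : (0:ℝ) < 1 - α := by linarith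
  refine ⟨K/(1-α) + (‖f 1‖/L2 + K) + K*(2:ℝ)^(1-α)/(1-α) + 2*C₂/((1-α)*L2), by positivity, ?_⟩
  intro x hx
  set y : ℕ := Nat.sqrt x with hydef
  have hy1 : 1 ≤ y := by
    rw [hydef]; exact Nat.sqrt_pos.mpr (by omega)
  have hyx : y ≤ x := Nat.sqrt_le_self x
  -- decomposition
  have hsplitT : ∑' n, t n = (∑ m ∈ Icc 1 y, t m) + (∑ m ∈ Ioc y x, t m) + ∑' k, t (k+(x+1)) := by
    have h0 : t 0 = 0 := by simp [ht]
    have hup := Summable.sum_add_tsum_nat_add (f := t) (x+1) hsum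
    have hrange : ∑ i ∈ range (x+1), t i = ∑ i ∈ Icc 1 x, t i := by
      have : range (x+1) = insert 0 (Icc 1 x) := by
        ext a; simp only [mem_range, mem_insert, mem_Icc]; omega
      rw [this, Finset.sum_insert (by simp), h0, zero_add]
    have hIoc : ∀ n : ℕ, Icc 1 n = Ioc 0 n := by
      intro n; ext a; simp only [mem_Icc, mem_Ioc]; omega
    have hIcc : ∑ i ∈ Icc 1 x, t i = (∑ m ∈ Icc 1 y, t m) + (∑ m ∈ Ioc y x, t m) := by
      rw [hIoc, hIoc, Finset.sum_Ioc_consecutive _ (Nat.zero_le y) hyx]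
    rw [← hup, hrange, hIcc]
  have hsplitS : (∑ n ∈ Icc 1 x, f (x/n))
      = (∑ m ∈ Icc 1 y, ((x/m - x/(m+1) : ℕ) : ℂ) * f m)
        + ∑ n ∈ (Icc 1 x).filter (fun n => ¬ (x/n ≤ y)), f (x/n) := by
    rw [← Finset.sum_filter_add_sum_filter_not (Icc 1 x) (fun n => x/n ≤ y) (fun n => f (x/n)),
      regroup f x y (by omega)]
  have hID : (∑ n ∈ Icc 1 x, f (x/n)) - (x:ℂ) * ∑' n, t n
      = (∑ n ∈ (Icc 1 x).filter (fun n => ¬ (x/n ≤ y)), f (x/n))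
        + (∑ m ∈ Icc 1 y, f m * (((x/m - x/(m+1) : ℕ) : ℂ) - (x:ℂ)/((m:ℂ)*((m:ℂ)+1))))
        - (x:ℂ) * (∑ m ∈ Ioc y x, t m) - (x:ℂ) * ∑' k, t (k+(x+1)) := by
    have hBS : (∑ m ∈ Icc 1 y, ((x/m - x/(m+1) : ℕ) : ℂ) * f m) - (x:ℂ) * ∑ m ∈ Icc 1 y, t m
        = ∑ m ∈ Icc 1 y, f m * (((x/m - x/(m+1) : ℕ) : ℂ) - (x:ℂ)/((m:ℂ)*((m:ℂ)+1))) := by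
      rw [Finset.mul_sum, ← Finset.sum_sub_distrib]
      apply Finset.sum_congr rfl
      intro m _
      rw [ht]
      ring
    rw [hsplitS, hsplitT]
    linear_combination hBS
  -- per-x real facts
  have hx0 : (0:ℝ) < x := by exact_mod_cast (by omega : 0 < x)
  have hx1R : (1:ℝ) ≤ x := by exact_mod_cast (by omega : 1 ≤ x)
  have hx2R : (2:ℝ) ≤ x := by exact_mod_cast hx
  have hy0R : (0:ℝ) < y := by exact_mod_cast hy1
  have hy1R : (1:ℝ) ≤ y := by exact_mod_cast hy1
  set s : ℝ := Real.sqrt x with hsdef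
  have hs0 : 0 < s := Real.sqrt_pos.mpr hx0
  have hss : s * s = x := Real.mul_self_sqrt (le_of_lt hx0)
  have hs1 : 1 ≤ s := by nlinarith
  have hyyx : (y:ℝ) * (y:ℝ) ≤ x := by
    have h := Nat.sqrt_le' x
    rw [Nat.pow_two] at h
    exact_mod_cast h
  have hxyy : (x:ℝ) < ((y:ℝ)+1) * ((y:ℝ)+1) := by exact_mod_cast Nat.lt_succ_sqrt x
  have hys : (y:ℝ) ≤ s := by nlinarith
  have hsy : s ≤ (y:ℝ) + 1 := by nlinarith
  have hs2y : s ≤ 2 * y := by linarith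
  have hlogx0 : 0 ≤ Real.log x := Real.log_nonneg hx1R
  have hlθ : L2 ≤ (Real.log x)^θ := by
    rw [hL2def]
    have hll : Real.log 2 ≤ Real.log x := Real.log_le_log (by norm_num) hx2R
    exact Real.rpow_le_rpow (Real.log_nonneg one_le_two) hll hθ
  have hlθ0 : 0 ≤ (Real.log x)^θ := Real.rpow_nonneg hlogx0 _
  have hxp1 : 1 ≤ (x:ℝ)^((α+1)/2) := by
    have h := Real.rpow_le_rpow_of_exponent_le hx1R (show (0:ℝ) ≤ (α+1)/2 by linarith)
    rwa [Real.rpow_zero] at h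
  have hspow : ∀ r : ℝ, s ^ r = (x:ℝ) ^ (r/2) := by
    intro r
    rw [hsdef, Real.sqrt_eq_rpow, ← Real.rpow_mul (le_of_lt hx0)]
    congr 1
    ring
  have hxmul : ∀ a b : ℝ, (x:ℝ)^a * (x:ℝ)^b = (x:ℝ)^(a+b) := fun a b =>
    (Real.rpow_add hx0 a b).symm
  -- Bound A
  have hA : ‖∑ n ∈ (Icc 1 x).filter (fun n => ¬ (x/n ≤ y)), f (x/n)‖
      ≤ K/(1-α) * ((x:ℝ)^((α+1)/2) * (Real.log x)^θ) := by
    set N : ℕ := x/(y+1) with hNdef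
    have hsub : (Icc 1 x).filter (fun n => ¬ (x/n ≤ y)) ⊆ Icc 1 N := by
      intro n hn
      simp only [mem_filter, mem_Icc] at hn
      rw [mem_Icc]
      obtain ⟨⟨hn1, hnx⟩, hny⟩ := hn
      have h1 : y + 1 ≤ x / n := by omega
      exact ⟨hn1, (WuZhai.div_ge_iff hn1 (by omega)).mp h1⟩
    have hNs : (N:ℝ) ≤ s := by
      have h1 : (N:ℝ) ≤ (x:ℝ)/((y:ℝ)+1) := by
        have h : ((x/(y+1):ℕ):ℝ) ≤ (x:ℝ)/(((y+1):ℕ):ℝ) := Nat.cast_div_le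
        push_cast at h
        exact h
      have h2 : (x:ℝ)/((y:ℝ)+1) ≤ (x:ℝ)/s :=
        div_le_div_of_nonneg_left (le_of_lt hx0) hs0 hsy
      have h3 : (x:ℝ)/s = s := by rw [← hss]; field_simp
      linarith
    have hterm : ∀ n ∈ (Icc 1 x).filter (fun n => ¬ (x/n ≤ y)),
        ‖f (x/n)‖ ≤ K * ((x:ℝ)/(n:ℝ))^α * (Real.log x)^θ := by
      intro n hn
      rw [mem_filter, mem_Icc] at hn
      obtain ⟨⟨hn1, hnx⟩, hny⟩ := hn
      have h2 : 2 ≤ x / n := by omega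
      have hcast : ((x/n : ℕ):ℝ) ≤ (x:ℝ)/(n:ℝ) := Nat.cast_div_le
      have h1c : (1:ℝ) ≤ ((x/n:ℕ):ℝ) := by exact_mod_cast (by omega : 1 ≤ x/n)
      refine le_trans (hf _ h2) ?_
      have b1 : ((x/n:ℕ):ℝ)^α ≤ ((x:ℝ)/(n:ℝ))^α :=
        Real.rpow_le_rpow (by positivity) hcast hα0
      have b2 : (Real.log ((x/n:ℕ):ℝ))^θ ≤ (Real.log x)^θ := by
        have hmono : Real.log ((x/n:ℕ):ℝ) ≤ Real.log x :=
          Real.log_le_log (by linarith) (by exact_mod_cast Nat.div_le_self x n)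
        exact Real.rpow_le_rpow (Real.log_nonneg h1c) hmono hθ
      have hb2n : 0 ≤ (Real.log ((x/n:ℕ):ℝ))^θ := Real.rpow_nonneg (Real.log_nonneg h1c) _
      exact mul_le_mul (mul_le_mul_of_nonneg_left b1 (le_of_lt hK)) b2 hb2n (by positivity)
    calc ‖∑ n ∈ (Icc 1 x).filter (fun n => ¬ (x/n ≤ y)), f (x/n)‖
        ≤ ∑ n ∈ (Icc 1 x).filter (fun n => ¬ (x/n ≤ y)), ‖f (x/n)‖ := norm_sum_le _ _
      _ ≤ ∑ n ∈ (Icc 1 x).filter (fun n => ¬ (x/n ≤ y)), K * ((x:ℝ)/(n:ℝ))^α * (Real.log x)^θ :=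
          Finset.sum_le_sum hterm
      _ ≤ ∑ n ∈ Icc 1 N, K * ((x:ℝ)/(n:ℝ))^α * (Real.log x)^θ :=
          Finset.sum_le_sum_of_subset_of_nonneg hsub (fun i _ _ => by positivity)
      _ = K * (Real.log x)^θ * ∑ n ∈ Icc 1 N, (x:ℝ)^α * (n:ℝ)^(-α) := by
          rw [Finset.mul_sum]
          apply Finset.sum_congr rfl
          intro n hn
          rw [mem_Icc] at hn
          have hn0 : (0:ℝ) < n := by exact_mod_cast (by omega : 0 < n)
          rw [Real.div_rpow (le_of_lt hx0) (le_of_lt hn0), Real.rpow_neg (le_of_lt hn0),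
            div_eq_mul_inv]
          ring
      _ ≤ K * (Real.log x)^θ * ((x:ℝ)^α * ((N:ℝ)^(1-α)/(1-α))) := by
          rw [← Finset.mul_sum]
          have := WuZhai.S1 N hα0 hα1
          have hKL : 0 ≤ K * (Real.log x)^θ := by positivity
          have hxα : (0:ℝ) ≤ (x:ℝ)^α := Real.rpow_nonneg (le_of_lt hx0) _
          exact mul_le_mul_of_nonneg_left (mul_le_mul_of_nonneg_left this hxα) hKL
      _ ≤ K * (Real.log x)^θ * ((x:ℝ)^α * ((x:ℝ)^((1-α)/2)/(1-α))) := by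
          have hr : (N:ℝ)^(1-α) ≤ (x:ℝ)^((1-α)/2) := by
            have := Real.rpow_le_rpow (by positivity) hNs (by linarith : (0:ℝ) ≤ 1-α)
            rwa [hspow (1-α)] at this
          have hKL : 0 ≤ K * (Real.log x)^θ := by positivity
          have hxα : (0:ℝ) ≤ (x:ℝ)^α := Real.rpow_nonneg (le_of_lt hx0) _
          apply mul_le_mul_of_nonneg_left _ hKL
          apply mul_le_mul_of_nonneg_left _ hxα
          exact (div_le_div_iff_of_pos_right h1α).mpr hr
      _ = K/(1-α) * ((x:ℝ)^((α+1)/2) * (Real.log x)^θ) := by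
          rw [div_eq_mul_inv ((x:ℝ)^((1-α)/2)) (1-α), ← mul_assoc ((x:ℝ)^α), hxmul]
          have he : α + (1-α)/2 = (α+1)/2 := by ring
          rw [he]
          ring
  -- Bound B
  have hB : ‖∑ m ∈ Icc 1 y, f m * (((x/m - x/(m+1) : ℕ) : ℂ) - (x:ℂ)/((m:ℂ)*((m:ℂ)+1)))‖
      ≤ (‖f 1‖/L2 + K) * ((x:ℝ)^((α+1)/2) * (Real.log x)^θ) := by
    have hterm : ∀ m ∈ Icc 1 y,
        ‖f m * (((x/m - x/(m+1) : ℕ) : ℂ) - (x:ℂ)/((m:ℂ)*((m:ℂ)+1)))‖ ≤ ‖f m‖ := by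
      intro m hm
      rw [mem_Icc] at hm
      rw [norm_mul]
      exact mul_le_of_le_one_right (norm_nonneg _) (WuZhai.cdiff x m hm.1)
    have h1 : ‖∑ m ∈ Icc 1 y, f m * (((x/m - x/(m+1) : ℕ) : ℂ) - (x:ℂ)/((m:ℂ)*((m:ℂ)+1)))‖
        ≤ ∑ m ∈ Icc 1 y, ‖f m‖ := le_trans (norm_sum_le _ _) (Finset.sum_le_sum hterm)
    have hins : Icc 1 y = insert 1 (Icc 2 y) := by
      ext a; simp only [mem_insert, mem_Icc]; omega
    have hnotmem : 1 ∉ Icc 2 y := by simp [mem_Icc]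
    have hsplit : ∑ m ∈ Icc 1 y, ‖f m‖ = ‖f 1‖ + ∑ m ∈ Icc 2 y, ‖f m‖ := by
      rw [hins, Finset.sum_insert hnotmem]
    have hf2 : ∑ m ∈ Icc 2 y, ‖f m‖ ≤ K * ((x:ℝ)^((α+1)/2) * (Real.log x)^θ) := by
      have htm : ∀ m ∈ Icc 2 y, ‖f m‖ ≤ K * (y:ℝ)^α * (Real.log x)^θ := by
        intro m hm
        rw [mem_Icc] at hm
        have hmy : (m:ℝ) ≤ (y:ℝ) := by exact_mod_cast hm.2
        have hm1 : (1:ℝ) ≤ (m:ℝ) := by exact_mod_cast (by omega : 1 ≤ m)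
        have hmx : (m:ℝ) ≤ (x:ℝ) := by exact_mod_cast (by omega : m ≤ x)
        refine le_trans (hf m hm.1) ?_
        have b1 : (m:ℝ)^α ≤ (y:ℝ)^α := Real.rpow_le_rpow (by linarith) hmy hα0
        have b2 : (Real.log m)^θ ≤ (Real.log x)^θ :=
          Real.rpow_le_rpow (Real.log_nonneg hm1) (Real.log_le_log (by linarith) hmx) hθ
        exact mul_le_mul (mul_le_mul_of_nonneg_left b1 (le_of_lt hK)) b2
          (Real.rpow_nonneg (Real.log_nonneg hm1) _) (by positivity)
      calc ∑ m ∈ Icc 2 y, ‖f m‖ ≤ ∑ m ∈ Icc 2 y, K * (y:ℝ)^α * (Real.log x)^θ :=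
            Finset.sum_le_sum htm
        _ = ((Icc 2 y).card : ℝ) * (K * (y:ℝ)^α * (Real.log x)^θ) := by
            rw [Finset.sum_const, nsmul_eq_mul]
        _ ≤ (y:ℝ) * (K * (y:ℝ)^α * (Real.log x)^θ) := by
            have hcard : ((Icc 2 y).card : ℝ) ≤ (y:ℝ) := by
              rw [Nat.card_Icc]
              exact_mod_cast (by omega : y + 1 - 2 ≤ y)
            exact mul_le_mul_of_nonneg_right hcard (by positivity)
        _ = K * ((y:ℝ)^((1:ℝ)+α) * (Real.log x)^θ) := by
            rw [show (y:ℝ)^((1:ℝ)+α) = (y:ℝ) * (y:ℝ)^α from by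
              rw [Real.rpow_add hy0R, Real.rpow_one]]
            ring
        _ ≤ K * ((x:ℝ)^((α+1)/2) * (Real.log x)^θ) := by
            have hb : (y:ℝ)^((1:ℝ)+α) ≤ (x:ℝ)^((α+1)/2) := by
              have h := Real.rpow_le_rpow (by linarith) hys (by linarith : (0:ℝ) ≤ 1+α)
              rw [hspow (1+α)] at h
              have he : (1+α)/2 = (α+1)/2 := by ring
              rwa [he] at h
            exact mul_le_mul_of_nonneg_left
              (mul_le_mul_of_nonneg_right hb hlθ0) (le_of_lt hK)
    have hf1 : ‖f 1‖ ≤ ‖f 1‖/L2 * ((x:ℝ)^((α+1)/2) * (Real.log x)^θ) := by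
      have hc : ‖f 1‖/L2 * L2 = ‖f 1‖ := div_mul_cancel₀ _ (ne_of_gt hL2)
      have hge : L2 ≤ (x:ℝ)^((α+1)/2) * (Real.log x)^θ := by nlinarith
      have := mul_le_mul_of_nonneg_left hge (div_nonneg (norm_nonneg (f 1)) (le_of_lt hL2))
      linarith
    rw [add_mul]
    linarith
  -- Bound C
  have hC : (x:ℝ) * ‖∑ m ∈ Ioc y x, t m‖
      ≤ K*(2:ℝ)^(1-α)/(1-α) * ((x:ℝ)^((α+1)/2) * (Real.log x)^θ) := by
    have htm : ∀ m ∈ Ioc y x, ‖t m‖ ≤ K * (Real.log x)^θ * (m:ℝ)^(α-2) := by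
      intro m hm
      rw [mem_Ioc] at hm
      have hm2 : 2 ≤ m := by omega
      have hm0 : (0:ℝ) < m := by exact_mod_cast (by omega : 0 < m)
      have hm1 : (1:ℝ) ≤ m := by exact_mod_cast (by omega : 1 ≤ m)
      have hmx : (m:ℝ) ≤ x := by exact_mod_cast hm.2
      calc ‖t m‖ ≤ ‖f m‖ * (m:ℝ)^(-2:ℝ) := WuZhai.tnorm f (by omega)
        _ ≤ (K * (m:ℝ)^α * (Real.log m)^θ) * (m:ℝ)^(-2:ℝ) :=
            mul_le_mul_of_nonneg_right (hf m hm2) (Real.rpow_nonneg hm0.le _)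
        _ ≤ (K * (m:ℝ)^α * (Real.log x)^θ) * (m:ℝ)^(-2:ℝ) := by
            gcongr (K * (m:ℝ)^α * ?_) * (m:ℝ)^(-2:ℝ) <;>
              first
                | exact Real.rpow_le_rpow (Real.log_nonneg hm1)
                    (Real.log_le_log (by linarith) hmx) hθ
                | positivity
        _ = K * (Real.log x)^θ * (m:ℝ)^(α-2) := by
            rw [show (m:ℝ)^(α-2) = (m:ℝ)^α * (m:ℝ)^(-2:ℝ) from by
              rw [sub_eq_add_neg, Real.rpow_add hm0]]
            ring
    have hsum1 : ∑ m ∈ Ioc y x, (m:ℝ)^(α-2) ≤ (y:ℝ)^(α-1)/(1-α) := by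
      have hIco : Ioc y x = Ico (y+1) (x+1) := by
        ext a; simp only [mem_Ioc, mem_Ico]; omega
      rw [hIco, Finset.sum_Ico_eq_sum_range]
      have h := WuZhai.S2 hy1 (q := α-2) (by linarith) (x+1-(y+1))
      rw [show α-2+1 = α-1 from by ring] at h
      rw [show -(α-1) = 1-α from by ring] at h
      exact h
    calc (x:ℝ) * ‖∑ m ∈ Ioc y x, t m‖
        ≤ (x:ℝ) * ∑ m ∈ Ioc y x, ‖t m‖ :=
          mul_le_mul_of_nonneg_left (norm_sum_le _ _) hx0.le
      _ ≤ (x:ℝ) * ∑ m ∈ Ioc y x, K * (Real.log x)^θ * (m:ℝ)^(α-2) :=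
          mul_le_mul_of_nonneg_left (Finset.sum_le_sum htm) hx0.le
      _ = (x:ℝ) * (K * (Real.log x)^θ * ∑ m ∈ Ioc y x, (m:ℝ)^(α-2)) := by
          rw [← Finset.mul_sum]
      _ ≤ (x:ℝ) * (K * (Real.log x)^θ * ((y:ℝ)^(α-1)/(1-α))) :=
          mul_le_mul_of_nonneg_left
            (mul_le_mul_of_nonneg_left hsum1 (by positivity)) hx0.le
      _ ≤ (x:ℝ) * (K * (Real.log x)^θ * ((s/2)^(α-1)/(1-α))) := by
          have hy2 : s/2 ≤ (y:ℝ) := by linarith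
          have h := WuZhai.rpow_anti (by positivity : (0:ℝ) < s/2) hy2
            (by linarith : α-1 ≤ 0)
          exact mul_le_mul_of_nonneg_left
            (mul_le_mul_of_nonneg_left ((div_le_div_iff_of_pos_right h1α).mpr h) (by positivity)) hx0.le
      _ = K*(2:ℝ)^(1-α)/(1-α) * ((x:ℝ)^((α+1)/2) * (Real.log x)^θ) := by
          rw [Real.div_rpow hs0.le (by norm_num : (0:ℝ) ≤ 2), hspow (α-1)]
          have h2 : ((2:ℝ)^(α-1))⁻¹ = (2:ℝ)^(1-α) := by
            rw [← Real.rpow_neg (by norm_num : (0:ℝ) ≤ 2)]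
            congr 1; ring
          have hx' : (x:ℝ) * (x:ℝ)^((α-1)/2) = (x:ℝ)^((α+1)/2) := by
            rw [show (x:ℝ) * (x:ℝ)^((α-1)/2) = (x:ℝ)^(1:ℝ) * (x:ℝ)^((α-1)/2) from by
              rw [Real.rpow_one], hxmul]
            congr 1; ring
          have key : (x:ℝ) * ((x:ℝ)^((α-1)/2) / (2:ℝ)^(α-1))
              = (x:ℝ)^((α+1)/2) * (2:ℝ)^(1-α) := by
            rw [div_eq_mul_inv, h2, ← mul_assoc, hx']
          calc (x:ℝ) * (K * (Real.log x)^θ * ((x:ℝ)^((α-1)/2) / (2:ℝ)^(α-1)/(1-α)))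
              = K * (Real.log x)^θ / (1-α) * ((x:ℝ) * ((x:ℝ)^((α-1)/2) / (2:ℝ)^(α-1))) := by
                ring
            _ = K*(2:ℝ)^(1-α)/(1-α) * ((x:ℝ)^((α+1)/2) * (Real.log x)^θ) := by
                rw [key]; ring
  -- Bound D
  have hD : (x:ℝ) * ‖∑' k, t (k+(x+1))‖
      ≤ 2*C₂/((1-α)*L2) * ((x:ℝ)^((α+1)/2) * (Real.log x)^θ) := by
    have hq1' : (0:ℝ) < -(q+1) := by linarith
    have hsumsh : Summable (fun k => ‖t (k+(x+1))‖) :=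
      (summable_nat_add_iff (x+1)).mpr hsum_norm
    have h1 : ‖∑' k, t (k+(x+1))‖ ≤ ∑' k, ‖t (k+(x+1))‖ := norm_tsum_le_tsum_norm hsumsh
    have h2 : ∑' k, ‖t (k+(x+1))‖ ≤ C₂ * ((x:ℝ)^(q+1)/(-(q+1))) := by
      apply Real.tsum_le_of_sum_range_le (fun _ => norm_nonneg _)
      intro n
      calc ∑ k ∈ range n, ‖t (k+(x+1))‖ ≤ ∑ k ∈ range n, C₂ * ((x+1+k:ℕ):ℝ)^q := by
            apply Finset.sum_le_sum
            intro k _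
            rw [show k+(x+1) = x+1+k from by omega]
            exact htb _ (by omega)
        _ = C₂ * ∑ k ∈ range n, ((x+1+k:ℕ):ℝ)^q := by rw [Finset.mul_sum]
        _ ≤ C₂ * ((x:ℝ)^(q+1)/(-(q+1))) :=
            mul_le_mul_of_nonneg_left (WuZhai.S2 (by omega : 1 ≤ x) hq n) hC₂.le
    calc (x:ℝ) * ‖∑' k, t (k+(x+1))‖
        ≤ (x:ℝ) * (C₂ * ((x:ℝ)^(q+1)/(-(q+1)))) :=
          mul_le_mul_of_nonneg_left (h1.trans h2) hx0.le
      _ = C₂ * ((x:ℝ) * (x:ℝ)^(q+1)) / (-(q+1)) := by ring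
      _ = C₂ * (x:ℝ)^(q+2) / (-(q+1)) := by
          rw [show (x:ℝ) * (x:ℝ)^(q+1) = (x:ℝ)^(1:ℝ) * (x:ℝ)^(q+1) from by
            rw [Real.rpow_one], hxmul]
          rw [show (1:ℝ)+(q+1) = q+2 from by ring]
      _ ≤ C₂ * (x:ℝ)^((α+1)/2) / ((1-α)/2) := by
          apply div_le_div₀ (by positivity)
            (mul_le_mul_of_nonneg_left (Real.rpow_le_rpow_of_exponent_le hx1R hq2) hC₂.le)
            (by linarith) hq1
      _ ≤ 2*C₂/((1-α)*L2) * ((x:ℝ)^((α+1)/2) * (Real.log x)^θ) := by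
          have hLL : 1 ≤ (Real.log x)^θ / L2 := (one_le_div hL2).mpr hlθ
          calc C₂ * (x:ℝ)^((α+1)/2) / ((1-α)/2)
              = 2*C₂/(1-α) * (x:ℝ)^((α+1)/2) := by
                field_simp
            _ ≤ 2*C₂/(1-α) * (x:ℝ)^((α+1)/2) * ((Real.log x)^θ / L2) :=
                le_mul_of_one_le_right (by positivity) hLL
            _ = 2*C₂/((1-α)*L2) * ((x:ℝ)^((α+1)/2) * (Real.log x)^θ) := by
                field_simp
  rw [hID]
  have step : ∀ a b c d : ℂ, ‖a + b - c - d‖ ≤ ‖a‖ + ‖b‖ + ‖c‖ + ‖d‖ := by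
    intro a b c d
    calc ‖a + b - c - d‖ ≤ ‖a + b - c‖ + ‖d‖ := norm_sub_le _ _
      _ ≤ ‖a + b‖ + ‖c‖ + ‖d‖ := by have := norm_sub_le (a+b) c; linarith
      _ ≤ ‖a‖ + ‖b‖ + ‖c‖ + ‖d‖ := by have := norm_add_le a b; linarith
  refine le_trans (step _ _ _ _) ?_
  rw [norm_mul, norm_mul, Complex.norm_natCast]
  calc ‖∑ n ∈ (Icc 1 x).filter (fun n => ¬ (x/n ≤ y)), f (x/n)‖
        + ‖∑ m ∈ Icc 1 y, f m * (((x/m - x/(m+1) : ℕ) : ℂ) - (x:ℂ)/((m:ℂ)*((m:ℂ)+1)))‖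
        + (x:ℝ) * ‖∑ m ∈ Ioc y x, t m‖ + (x:ℝ) * ‖∑' k, t (k+(x+1))‖
      ≤ (K/(1-α) + (‖f 1‖/L2 + K) + K*(2:ℝ)^(1-α)/(1-α) + 2*C₂/((1-α)*L2))
          * ((x:ℝ)^((α+1)/2) * (Real.log x)^θ) := by
        rw [add_mul, add_mul, add_mul]
        exact add_le_add (add_le_add (add_le_add hA hB) hC) hD
    _ = (K/(1-α) + (‖f 1‖/L2 + K) + K*(2:ℝ)^(1-α)/(1-α) + 2*C₂/((1-α)*L2))
          * (x:ℝ)^((α+1)/2) * (Real.log x)^θ := by ring
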